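/- Let g, h : ℝ⁴ → Matrix (Fin 4) (Fin 4) ℝ be C² maps such that g(x) is symmetric and invertible for every x and h(x) is symmetric for every x. For a matrix-valued map G (with G(x) invertible) define the Christoffel symbols Γ[G]^k_{ij}(x) = (1/2) Σ_{r} (G(x)⁻¹)^{kr} (∂_i G_{rj}(x) + ∂_j G_{ir}(x) − ∂_r G_{ij}(x)), and define the covariant derivative of h with respect to g by ∇_i h_{jk}(x) = ∂_i h_{jk}(x) − Σ_s Γ[g]^s_{ij}(x) h_{sk}(x) − Σ_s Γ[g]^s_{ik}(x) h_{js}(x). Then for every x ∈ ℝ⁴ and all indices i, j, k ∈ Fin 4, the function ε ↦ Γ[g − ε·h]^k_{ij}(x) is differentiable at ε = 0 with derivative −(1/2) Σ_{r} (g(x)⁻¹)^{kr} (∇_i h_{rj}(x) + ∇_j h_{ir}(x) − ∇_r h_{ij}(x)). -/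

import Mathlib

open Matrix

/-- The partial derivative `∂_i φ (x)` of a real-valued function on `ℝ⁴` along the `i`-th
standard basis vector. -/
noncomputable def pd (i : Fin 4) (φ : (Fin 4 → ℝ) → ℝ) (x : Fin 4 → ℝ) : ℝ :=
  fderiv ℝ φ x (Pi.single i 1)

/-- The Christoffel symbols `Γ[G]^k_{ij}(x)` of a matrix-valued map `G`. -/
noncomputable def christoffel (G : (Fin 4 → ℝ) → Matrix (Fin 4) (Fin 4) ℝ)
    (k i j : Fin 4) (x : Fin 4 → ℝ) : ℝ :=
  (1/2) * ∑ r : Fin 4, (G x)⁻¹ k r *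
    (pd i (fun y => G y r j) x + pd j (fun y => G y i r) x - pd r (fun y => G y i j) x)

/-- The covariant derivative `∇_i h_{jk}(x)` of `h` with respect to the metric `g`. -/
noncomputable def covDeriv (g h : (Fin 4 → ℝ) → Matrix (Fin 4) (Fin 4) ℝ)
    (i j k : Fin 4) (x : Fin 4 → ℝ) : ℝ :=
  pd i (fun y => h y j k) x
    - ∑ s : Fin 4, christoffel g s i j x * h x s k
    - ∑ s : Fin 4, christoffel g s i k x * h x j s

/-- entry extraction as a continuous linear map (w.r.t. the linfty operator norm) -/
noncomputable def entryCLM (k r : Fin 4) :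
    letI : NormedRing (Matrix (Fin 4) (Fin 4) ℝ) := Matrix.linftyOpNormedRing
    Matrix (Fin 4) (Fin 4) ℝ →L[ℝ] ℝ :=
  letI : NormedRing (Matrix (Fin 4) (Fin 4) ℝ) := Matrix.linftyOpNormedRing
  LinearMap.mkContinuous
    { toFun := fun M => M k r, map_add' := fun _ _ => rfl, map_smul' := fun _ _ => rfl } 1
    (fun M => by
      have h1 : ‖M k r‖₊ ≤ ‖M‖₊ := by
        rw [Matrix.linfty_opNNNorm_def]
        exact le_trans
          (Finset.single_le_sum (f := fun j => ‖M k j‖₊) (fun _ _ => zero_le)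
            (Finset.mem_univ r))
          (Finset.le_sup (f := fun i => ∑ j, ‖M i j‖₊) (Finset.mem_univ k))
      rw [one_mul]; exact NNReal.coe_le_coe.2 h1)

lemma invEntry_hasDerivAt (X H : Matrix (Fin 4) (Fin 4) ℝ) (hX : IsUnit X.det) (k r : Fin 4) :
    HasDerivAt (fun ε : ℝ => (X - ε • H)⁻¹ k r) ((X⁻¹ * H * X⁻¹) k r) 0 := by
  letI : NormedRing (Matrix (Fin 4) (Fin 4) ℝ) := Matrix.linftyOpNormedRing
  letI : NormedAlgebra ℝ (Matrix (Fin 4) (Fin 4) ℝ) := Matrix.linftyOpNormedAlgebra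
  haveI : CompleteSpace (Matrix (Fin 4) (Fin 4) ℝ) := FiniteDimensional.complete ℝ _
  have hXu : IsUnit X := (Matrix.isUnit_iff_isUnit_det X).2 hX
  obtain ⟨u, hu⟩ := hXu
  have h1 : HasDerivAt (fun ε : ℝ => X - ε • H) (-H) 0 := by
    have := ((hasDerivAt_id (0:ℝ)).smul_const H).const_sub X
    simp only [id_eq, one_smul] at this
    exact this
  have h2 : HasFDerivAt Ring.inverse
      (-(ContinuousLinearMap.mulLeftRight ℝ (Matrix (Fin 4) (Fin 4) ℝ) ↑u⁻¹ ↑u⁻¹))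
      (X - (0:ℝ) • H) := by
    simpa [hu] using hasFDerivAt_ringInverse (𝕜 := ℝ) u
  have h3 := h2.comp_hasDerivAt 0 h1
  have h4 : HasDerivAt (fun ε : ℝ => Ring.inverse (X - ε • H)) (X⁻¹ * H * X⁻¹) 0 := by
    convert h3 using 1
    all_goals try rfl
    simp [ContinuousLinearMap.mulLeftRight_apply, ← hu, Matrix.coe_units_inv]
  have h5 : HasDerivAt (fun ε : ℝ => (X - ε • H)⁻¹) (X⁻¹ * H * X⁻¹) 0 := by
    simpa [Matrix.nonsing_inv_eq_ringInverse] using h4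
  have := (entryCLM k r).hasFDerivAt.comp_hasDerivAt 0 h5
  exact this

lemma chr_symm (g : (Fin 4 → ℝ) → Matrix (Fin 4) (Fin 4) ℝ)
    (hgsymm : ∀ x, (g x).IsSymm) (s p q : Fin 4) (x : Fin 4 → ℝ) :
    christoffel g s p q x = christoffel g s q p x := by
  have e : ∀ a b : Fin 4, (fun y => g y a b) = (fun y => g y b a) :=
    fun a b => funext fun y => (hgsymm y).apply b a
  unfold christoffel
  congr 1
  apply Finset.sum_congr rfl
  intro r _
  rw [e r q, e p r, e p q]
  ring

/-- For `C²` maps `g, h` with `g x` symmetric invertible and `h x` symmetric,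
the Christoffel symbols of the deformed metric `g - ε • h` are differentiable in `ε` at
`ε = 0` with derivative
`-(1/2) ∑_r (g x)⁻¹^{kr} (∇_i h_{rj} + ∇_j h_{ir} - ∇_r h_{ij})(x)`. -/
theorem metric_connection_variation
    (g h : (Fin 4 → ℝ) → Matrix (Fin 4) (Fin 4) ℝ)
    (hgC2 : ∀ i j : Fin 4, ContDiff ℝ 2 (fun x => g x i j))
    (hhC2 : ∀ i j : Fin 4, ContDiff ℝ 2 (fun x => h x i j))
    (hgsymm : ∀ x, (g x).IsSymm) (hginv : ∀ x, IsUnit (g x).det)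
    (hhsymm : ∀ x, (h x).IsSymm) :
    ∀ (x : Fin 4 → ℝ) (i j k : Fin 4),
      HasDerivAt (fun ε : ℝ => christoffel (fun y => g y - ε • h y) k i j x)
        (-(1/2) * ∑ r : Fin 4, (g x)⁻¹ k r *
          (covDeriv g h i r j x + covDeriv g h j i r x - covDeriv g h r i j x))
        0 := by
  intro x i j k
  -- abbreviations
  set X := g x with hX
  set H := h x with hH
  -- linearity of pd
  have hpd : ∀ (ε : ℝ) (m p q : Fin 4),
      pd m (fun y => (g y - ε • h y) p q) x
        = pd m (fun y => g y p q) x - ε * pd m (fun y => h y p q) x := by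
    intro ε m p q
    have hg' : DifferentiableAt ℝ (fun y => g y p q) x :=
      (hgC2 p q).differentiable (by norm_num) x
    have hh' : DifferentiableAt ℝ (fun y => h y p q) x :=
      (hhC2 p q).differentiable (by norm_num) x
    have heq : (fun y => (g y - ε • h y) p q) = fun y => g y p q - ε * h y p q := by
      funext y; simp [Matrix.sub_apply, Matrix.smul_apply, smul_eq_mul]
    unfold pd
    rw [heq, fderiv_fun_sub hg' (hh'.const_mul ε), fderiv_const_mul hh']
    simp
  -- rewrite the function of ε
  have key : (fun ε : ℝ => christoffel (fun y => g y - ε • h y) k i j x)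
      = fun ε : ℝ => (1/2) * ∑ r : Fin 4, ((X - ε • H)⁻¹ k r) *
          ((pd i (fun y => g y r j) x + pd j (fun y => g y i r) x - pd r (fun y => g y i j) x)
            - ε * (pd i (fun y => h y r j) x + pd j (fun y => h y i r) x
                    - pd r (fun y => h y i j) x)) := by
    funext ε
    unfold christoffel
    congr 1
    apply Finset.sum_congr rfl
    intro r _
    rw [hpd, hpd, hpd]
    ring
  rw [key]
  -- per-term derivative
  have hterm : ∀ r : Fin 4, HasDerivAt
      (fun ε : ℝ => ((X - ε • H)⁻¹ k r) *
          ((pd i (fun y => g y r j) x + pd j (fun y => g y i r) x - pd r (fun y => g y i j) x)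
            - ε * (pd i (fun y => h y r j) x + pd j (fun y => h y i r) x
                    - pd r (fun y => h y i j) x)))
      ((X⁻¹ * H * X⁻¹) k r *
          (pd i (fun y => g y r j) x + pd j (fun y => g y i r) x - pd r (fun y => g y i j) x)
        - X⁻¹ k r *
          (pd i (fun y => h y r j) x + pd j (fun y => h y i r) x - pd r (fun y => h y i j) x))
      0 := by
    intro r
    have h1 := invEntry_hasDerivAt X H (hginv x) k r
    have h2 : HasDerivAt (fun ε : ℝ =>
        ((pd i (fun y => g y r j) x + pd j (fun y => g y i r) x - pd r (fun y => g y i j) x)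
          - ε * (pd i (fun y => h y r j) x + pd j (fun y => h y i r) x
                    - pd r (fun y => h y i j) x)))
        (-(pd i (fun y => h y r j) x + pd j (fun y => h y i r) x - pd r (fun y => h y i j) x))
        0 := by
      have base := ((hasDerivAt_id (0:ℝ)).mul_const
          (pd i (fun y => h y r j) x + pd j (fun y => h y i r) x
            - pd r (fun y => h y i j) x)).const_sub
        (pd i (fun y => g y r j) x + pd j (fun y => g y i r) x - pd r (fun y => g y i j) x)
      simp only [id_eq, one_mul] at base
      exact base
    have := h1.mul h2
    convert this using 1
    all_goals try rfl
    simp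
    ring
  have hsum := HasDerivAt.sum (fun r (_ : r ∈ Finset.univ) => hterm r)
  have hfinal := hsum.const_mul (1/2 : ℝ)
  convert hfinal using 1
  all_goals try rfl
  -- the algebraic identity
  -- first, simplify the covariant derivative combination
  have hD1 : ∀ r : Fin 4,
      covDeriv g h i r j x + covDeriv g h j i r x - covDeriv g h r i j x
        = (pd i (fun y => h y r j) x + pd j (fun y => h y i r) x - pd r (fun y => h y i j) x)
          - 2 * ∑ s : Fin 4, christoffel g s i j x * h x r s := by
    intro r
    have e1 : ∑ s : Fin 4, christoffel g s i r x * h x s j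
        = ∑ s : Fin 4, christoffel g s r i x * h x s j :=
      Finset.sum_congr rfl fun s _ => by rw [chr_symm g hgsymm]
    have e2 : ∑ s : Fin 4, christoffel g s j r x * h x i s
        = ∑ s : Fin 4, christoffel g s r j x * h x i s :=
      Finset.sum_congr rfl fun s _ => by rw [chr_symm g hgsymm]
    have e3 : ∑ s : Fin 4, christoffel g s j i x * h x s r
        = ∑ s : Fin 4, christoffel g s i j x * h x r s :=
      Finset.sum_congr rfl fun s _ => by
        rw [chr_symm g hgsymm, (hhsymm x).apply s r]
    unfold covDeriv
    rw [e1, e2, e3]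
    ring
  have hrw : ∑ r : Fin 4, (g x)⁻¹ k r *
        (covDeriv g h i r j x + covDeriv g h j i r x - covDeriv g h r i j x)
      = ∑ r : Fin 4, X⁻¹ k r *
        ((pd i (fun y => h y r j) x + pd j (fun y => h y i r) x - pd r (fun y => h y i j) x)
          - 2 * ∑ s : Fin 4, christoffel g s i j x * h x r s) :=
    Finset.sum_congr rfl fun r _ => by rw [hD1 r, ← hX]
  rw [hrw]
  unfold christoffel
  rw [← hX, ← hH]
  simp only [Matrix.mul_apply, Finset.sum_mul, Finset.mul_sum, Fin.sum_univ_four]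
  ring
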